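/- arXiv:2401.12515 — 2 statements merged into one kernel-verified Lean document; each statement's English description precedes it below -/
import Mathlib

section
/- Let F be a field of characteristic 2, let φ be a quadratic form over F of dimension at least 2, and let π be an anisotropic bilinear Pfister form over F such that π⊗φ is anisotropic. Then the first isotropy index of π⊗φ is at least dim(π), i.e., the total isotropy index of (π⊗φ) over the function field F(π⊗φ) is at least dim(π). -/
/- Common framework: quadratic forms over fields of characteristic 2,
represented as `QuadraticForm F (ι → F)` for a finite index type `ι`
(dimension = `Fintype.card ι`), diagonal bilinear forms represented by
their vectors of diagonal entries, isotropy indices, function fields of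
quadrics (characterized up to isomorphism), etc. -/

noncomputable section
namespace Char2QF

open QuadraticMap

variable (F : Type) [Field F]

/-- Scalar extension of a quadratic form on `ι → F` along a field extension `E/F`. -/
def qext {ι : Type} [Fintype ι] (φ : QuadraticForm F (ι → F))
    (E : Type) [Field E] [Algebra F E] : QuadraticForm E (ι → E) :=
  letI := Classical.decEq ι
  (∑ i : ι, algebraMap F E (φ (Pi.single i 1)) •
      linMulLin (LinearMap.proj i) (LinearMap.proj i))
  + ∑ i : ι, ∑ j : ι,
      if (Fintype.equivFin ι) i < (Fintype.equivFin ι) j then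
        algebraMap F E (polar φ (Pi.single i 1) (Pi.single j 1)) •
          linMulLin (LinearMap.proj i) (LinearMap.proj j)
      else 0

/-- The binary quadratic form `[a,b] : (x,y) ↦ a x² + x y + b y²`. -/
def binQF (a b : F) : QuadraticForm F (Bool → F) :=
  a • linMulLin (LinearMap.proj false) (LinearMap.proj false)
  + linMulLin (LinearMap.proj false) (LinearMap.proj true)
  + b • linMulLin (LinearMap.proj true) (LinearMap.proj true)

/-- The hyperbolic plane `H = [0,0]`. -/
def hyp : QuadraticForm F (Bool → F) := binQF F 0 0

/-- The totally singular diagonal quadratic form `⟨c i⟩ : v ↦ ∑ c i * (v i)²`. -/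
def diagQF {ι : Type} [Fintype ι] (c : ι → F) : QuadraticForm F (ι → F) :=
  ∑ i, c i • linMulLin (LinearMap.proj i) (LinearMap.proj i)

/-- Orthogonal sum of two quadratic forms. -/
def oplus {ι κ : Type} [Fintype ι] [Fintype κ]
    (φ : QuadraticForm F (ι → F)) (ψ : QuadraticForm F (κ → F)) :
    QuadraticForm F (ι ⊕ κ → F) :=
  φ.comp (LinearMap.funLeft F F Sum.inl) + ψ.comp (LinearMap.funLeft F F Sum.inr)

/-- Tensor product of the diagonal bilinear form with entries `b : κ → F`
with the quadratic form `φ`, i.e. `b₁·φ ⊥ … ⊥ b_k·φ`. -/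
def tmulQ {κ ι : Type} [Fintype κ] [Fintype ι] (b : κ → F)
    (φ : QuadraticForm F (ι → F)) : QuadraticForm F (κ × ι → F) :=
  ∑ k, b k • φ.comp (LinearMap.funLeft F F (fun i => (k, i)))

/-- Isometry of quadratic forms. -/
def QEquiv {V W : Type} [AddCommGroup V] [Module F V] [AddCommGroup W] [Module F W]
    (φ : QuadraticForm F V) (ψ : QuadraticForm F W) : Prop :=
  ∃ e : V ≃ₗ[F] W, ∀ v, ψ (e v) = φ v

/-- A quadratic form is isotropic if it has a nontrivial zero. -/
def Isotropic {V : Type} [AddCommGroup V] [Module F V] (φ : QuadraticForm F V) : Prop :=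
  ∃ v, v ≠ 0 ∧ φ v = 0

/-- `μ ≼ φ` : `μ` is (isometric to) the restriction of `φ` to a subspace. -/
def Dominates {V W : Type} [AddCommGroup V] [Module F V] [AddCommGroup W] [Module F W]
    (φ : QuadraticForm F V) (μ : QuadraticForm F W) : Prop :=
  ∃ f : W →ₗ[F] V, Function.Injective f ∧ ∀ w, φ (f w) = μ w

/-- The quadratic radical `{v | v ⊥ V and φ v = 0}`; its dimension is the defect. -/
def quadRadical {V : Type} [AddCommGroup V] [Module F V] (φ : QuadraticForm F V) :
    Submodule F V where
  carrier := {v | (∀ w, polar φ v w = 0) ∧ φ v = 0}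
  zero_mem' := by
    refine ⟨fun w => ?_, map_zero φ⟩
    simp [polar_zero_left]
  add_mem' := by
    rintro x y ⟨hx1, hx2⟩ ⟨hy1, hy2⟩
    refine ⟨fun w => ?_, ?_⟩
    · rw [polar_add_left, hx1 w, hy1 w, add_zero]
    · have : φ (x + y) = φ x + φ y + polar φ x y := by
        simp [polar]
      rw [this, hx1 y, hx2, hy2]; ring
  smul_mem' := by
    rintro c x ⟨hx1, hx2⟩
    refine ⟨fun w => ?_, ?_⟩
    · rw [polar_smul_left, hx1 w, smul_zero]
    · rw [QuadraticMap.map_smul, hx2, smul_zero]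

/-- The defect `i_d` of a quadratic form. -/
def iD {V : Type} [AddCommGroup V] [Module F V] (φ : QuadraticForm F V) : ℕ :=
  Module.finrank F (quadRadical F φ)

/-- The total isotropy index `i_t`: the maximal dimension of a totally isotropic subspace. -/
def iT {V : Type} [AddCommGroup V] [Module F V] (φ : QuadraticForm F V) : ℕ :=
  sSup {d | ∃ U : Submodule F V, Module.finrank F U = d ∧ ∀ v ∈ U, φ v = 0}

/-- The Witt index `i_W = i_t - i_d`. -/
def iW {V : Type} [AddCommGroup V] [Module F V] (φ : QuadraticForm F V) : ℕ :=
  iT F φ - iD F φ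

/-- A quadratic form is nonsingular (type `(r,0)`) iff its polar form is nondegenerate. -/
def Nonsingular {V : Type} [AddCommGroup V] [Module F V] (φ : QuadraticForm F V) : Prop :=
  ∀ x, (∀ y, polar φ x y = 0) → x = 0

/-- A quadratic form is totally singular iff its polar form vanishes identically. -/
def TotallySingular {V : Type} [AddCommGroup V] [Module F V] (φ : QuadraticForm F V) : Prop :=
  ∀ x y, polar φ x y = 0

/-- A quadratic form is round if its nonzero represented elements are
exactly its similarity factors. -/
def QRound {V : Type} [AddCommGroup V] [Module F V] (φ : QuadraticForm F V) : Prop :=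
  ∀ c : F, c ≠ 0 → ((∃ v, φ v = c) ↔ QEquiv F (c • φ) φ)

/-- `nsBlock a b = [a₁,b₁] ⊥ … ⊥ [a_r, b_r]`, a nonsingular quadratic form. -/
def nsBlock {r : ℕ} (a b : Fin r → F) : QuadraticForm F ((Fin r × Bool) → F) :=
  ∑ i, (binQF F (a i) (b i)).comp (LinearMap.funLeft F F (fun x => (i, x)))

/-- `φ` has type `(r,s)` : `φ ≅ [a₁,b₁] ⊥ … ⊥ [a_r,b_r] ⊥ ⟨c₁,…,c_s⟩`. -/
def HasType {ι : Type} [Fintype ι] (φ : QuadraticForm F (ι → F)) (r s : ℕ) : Prop :=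
  ∃ (a b : Fin r → F) (c : Fin s → F),
    QEquiv F φ (oplus F (nsBlock F a b) (diagQF F c))

/-! ### Diagonal (symmetric) bilinear forms, given by the vector of diagonal entries -/

/-- The symmetric bilinear pairing `(x,y) ↦ ∑ π i * x i * y i` of the
diagonal bilinear form with entries `π`. -/
def diagPair {ι : Type} [Fintype ι] (π : ι → F) (x y : ι → F) : F :=
  ∑ i, π i * x i * y i

/-- A (diagonal) bilinear form is anisotropic if `b(v,v) = 0` only for `v = 0`. -/
def BAnisotropic {ι : Type} [Fintype ι] (π : ι → F) : Prop :=
  ∀ v, diagPair F π v v = 0 → v = 0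

/-- Isometry of diagonal bilinear forms. -/
def BEquiv {ι κ : Type} [Fintype ι] [Fintype κ] (π : ι → F) (ρ : κ → F) : Prop :=
  ∃ e : (ι → F) ≃ₗ[F] (κ → F), ∀ x y, diagPair F ρ (e x) (e y) = diagPair F π x y

/-- A bilinear form is round if its set of nonzero represented elements `D(b)`
equals its set of similarity factors `G(b)`. -/
def BRound {ι : Type} [Fintype ι] (π : ι → F) : Prop :=
  ∀ a : F, a ≠ 0 → ((∃ v, diagPair F π v v = a) ↔ BEquiv F (fun i => a * π i) π)

/-- The diagonal entries of the `n`-fold bilinear Pfister form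
`⟨⟨a₁,…,aₙ⟩⟩ = ⟨1,a₁⟩_b ⊗ … ⊗ ⟨1,aₙ⟩_b`, indexed by subsets of `Fin n`. -/
def bPf {n : ℕ} (a : Fin n → F) : (Fin n → Bool) → F :=
  fun S => ∏ i, if S i then a i else 1

/-- The diagonal entries of the 1-fold bilinear Pfister form `⟨1,a⟩_b`. -/
def bPf1 (a : F) : Bool → F := fun s => if s then a else 1

/-- `L` is (isomorphic to) the function field `F(φ)` of the quadric of `φ`:
it is generated over `F` by the coordinates of a generic zero of `φ`
(normalized so that some coordinate is 1), i.e. by a zero of `φ` whose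
coordinates generate `L` and with transcendence degree `dim φ - 2` over `F`. -/
def IsFunctionField {ι : Type} [Fintype ι] (φ : QuadraticForm F (ι → F))
    (L : Type) [Field L] [Algebra F L] : Prop :=
  ∃ v : ι → L, qext F φ L v = 0 ∧ (∃ i, v i = 1) ∧
    IntermediateField.adjoin F (Set.range v) = ⊤ ∧
    ∃ s : Finset L, s.card + 2 = Fintype.card ι ∧
      IsTranscendenceBasis F (fun x : (s : Set L) => (x : L))

end Char2QF
namespace Char2QF

/-! ### Auxiliary development for stmt2 -/

section Aux
open Finset QuadraticMap
variable {L : Type} [Field L] {n : ℕ}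

def sx (S T : Fin n → Bool) : Fin n → Bool := fun j => xor (S j) (T j)

lemma sx_comm (S T : Fin n → Bool) : sx S T = sx T S := by
  funext j; simp [sx, Bool.xor_comm]

lemma sx_sx (S T : Fin n → Bool) : sx S (sx S T) = T := by
  funext j; simp [sx]

lemma sx_invol (S : Fin n → Bool) : Function.Involutive (sx S) := fun T => sx_sx S T

lemma sx_cancel (S T : Fin n → Bool) : sx (sx S T) S = T := by
  rw [sx_comm]; exact sx_sx S T

lemma sx_bot (S : Fin n → Bool) : sx S (fun _ => false) = S := by
  funext j; simp [sx]

lemma sx3 (A B S : Fin n → Bool) : sx (sx (sx A B) S) A = sx S B := by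
  funext j
  simp only [sx]
  cases A j <;> cases B j <;> cases S j <;> rfl

lemma sx4 (S T C : Fin n → Bool) : sx (sx S T) (sx T C) = sx S C := by
  funext j
  simp only [sx]
  cases S j <;> cases T j <;> cases C j <;> rfl

lemma sx_ne {A B : Fin n → Bool} (hAB : A ≠ B) (S : Fin n → Bool) : sx (sx A B) S ≠ S := by
  intro h
  apply hAB
  funext j
  have := congrFun h j
  simp only [sx] at this
  cases hA : A j <;> cases hB : B j <;> cases hS : S j <;>
    simp [hA, hB, hS] at this ⊢

def ccf (α : Fin n → L) (S T : Fin n → Bool) : L := ∏ j, if T j && !(S j) then α j else 1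

lemma cc_sx (α : Fin n → L) (S A : Fin n → Bool) : ccf α S (sx S A) = ccf α S A := by
  unfold ccf
  refine Finset.prod_congr rfl fun j _ => ?_
  cases hS : S j <;> cases hA : A j <;> simp [sx, hS, hA]

lemma I1 (α : Fin n → L) (A T : Fin n → Bool) :
    bPf L α (sx A T) * (ccf α (sx A T) A * ccf α (sx A T) A) = bPf L α A * bPf L α T := by
  unfold bPf ccf
  rw [← Finset.prod_mul_distrib, ← Finset.prod_mul_distrib, ← Finset.prod_mul_distrib]
  refine Finset.prod_congr rfl fun j _ => ?_
  cases hA : A j <;> cases hT : T j <;> simp [sx, hA, hT]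

lemma I2 (α : Fin n → L) (S A B : Fin n → Bool) :
    bPf L α (sx (sx A B) S) * (ccf α (sx (sx A B) S) A * ccf α (sx (sx A B) S) B)
      = bPf L α S * (ccf α S A * ccf α S B) := by
  unfold bPf ccf
  rw [← Finset.prod_mul_distrib, ← Finset.prod_mul_distrib, ← Finset.prod_mul_distrib,
    ← Finset.prod_mul_distrib]
  refine Finset.prod_congr rfl fun j _ => ?_
  cases hA : A j <;> cases hB : B j <;> cases hS : S j <;> simp [sx, hA, hB, hS]

lemma I3 (α : Fin n → L) (S T C : Fin n → Bool) :
    ccf α S (sx C T) * ccf α (sx S (sx C T)) T = ccf α S T * ccf α (sx S T) (sx T C) := by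
  unfold ccf
  rw [← Finset.prod_mul_distrib, ← Finset.prod_mul_distrib]
  refine Finset.prod_congr rfl fun j _ => ?_
  cases hT : T j <;> cases hS : S j <;> cases hC : C j <;> simp [sx, hT, hS, hC]

lemma I4 (α : Fin n → L) (S T : Fin n → Bool) :
    ccf α S T * ccf α (sx S T) T = bPf L α T := by
  unfold ccf bPf
  rw [← Finset.prod_mul_distrib]
  refine Finset.prod_congr rfl fun j _ => ?_
  cases hT : T j <;> cases hS : S j <;> simp [sx, hT, hS]

/-- the diagonal pairing of the Pfister form -/
def bform (α : Fin n → L) (x y : (Fin n → Bool) → L) : L := ∑ S, bPf L α S * x S * y S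

/-- multiplication in the "Pfister algebra" L[t₁,…,tₙ]/(tᵢ²-αᵢ) in the monomial basis -/
def rmul (α : Fin n → L) (x y : (Fin n → Bool) → L) : (Fin n → Bool) → L :=
  fun S => ∑ T, x T * y (sx S T) * ccf α S T

lemma rmul_reindex (α : Fin n → L) (u x : (Fin n → Bool) → L) (S : Fin n → Bool) :
    rmul α u x S = ∑ A, u (sx S A) * x A * ccf α S A := by
  unfold rmul
  refine Fintype.sum_equiv ((sx_invol S).toPerm) _ _ fun T => ?_
  show u T * x (sx S T) * ccf α S T = u (sx S (sx S T)) * x (sx S T) * ccf α S (sx S T)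
  rw [sx_sx, cc_sx]

lemma C1 [CharP L 2] (α : Fin n → L) {A B : Fin n → Bool} (hAB : A ≠ B)
    (u : (Fin n → Bool) → L) :
    ∑ S, bPf L α S * (ccf α S A * ccf α S B) * (u (sx S A) * u (sx S B)) = 0 := by
  apply Finset.sum_involution (g := fun S _ => sx (sx A B) S)
  · intro S _
    rw [show sx (sx (sx A B) S) A = sx S B from sx3 A B S,
      show sx (sx (sx A B) S) B = sx S A from ?hB, I2,
      mul_comm (u (sx S B)) (u (sx S A))]
    · exact CharTwo.add_self_eq_zero _
    case hB =>
      rw [sx_comm A B]; exact sx3 B A S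
  · intro S _ _
    exact sx_ne hAB S
  · intro S _; exact Finset.mem_univ _
  · intro S _; exact sx_sx _ S

lemma C2 (α : Fin n → L) (A : Fin n → Bool) (u : (Fin n → Bool) → L) :
    ∑ S, bPf L α S * (ccf α S A * ccf α S A) * (u (sx S A) * u (sx S A))
      = bPf L α A * ∑ T, bPf L α T * u T * u T := by
  rw [Finset.mul_sum]
  refine Fintype.sum_equiv ((sx_invol A).toPerm) _ _ fun S => ?_
  show bPf L α S * (ccf α S A * ccf α S A) * (u (sx S A) * u (sx S A))
      = bPf L α A * (bPf L α (sx A S) * u (sx A S) * u (sx A S))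
  have h := I1 α A (sx A S)
  rw [sx_sx] at h
  rw [sx_comm S A, h]
  ring

lemma keyB [CharP L 2] (α : Fin n → L) (u x y : (Fin n → Bool) → L) :
    bform α (rmul α u x) (rmul α u y) = bform α u u * bform α x y := by
  unfold bform
  have step : ∀ S : Fin n → Bool,
      bPf L α S * rmul α u x S * rmul α u y S
        = ∑ A, ∑ B, bPf L α S * (ccf α S A * ccf α S B) * (u (sx S A) * u (sx S B))
            * (x A * y B) := by
    intro S
    rw [rmul_reindex, rmul_reindex, mul_assoc, Finset.sum_mul_sum, Finset.mul_sum]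
    refine Finset.sum_congr rfl fun A _ => ?_
    rw [Finset.mul_sum]
    refine Finset.sum_congr rfl fun B _ => ?_
    ring
  rw [Finset.sum_congr rfl fun S _ => step S, Finset.sum_comm]
  have inner : ∀ A : Fin n → Bool,
      (∑ S, ∑ B, bPf L α S * (ccf α S A * ccf α S B) * (u (sx S A) * u (sx S B)) * (x A * y B))
        = (∑ T, bPf L α T * u T * u T) * (bPf L α A * x A * y A) := by
    intro A
    rw [Finset.sum_comm]
    rw [Fintype.sum_eq_single A (fun B hBA => ?_)]
    · have := C2 α A u
      rw [show (∑ S, bPf L α S * (ccf α S A * ccf α S A) * (u (sx S A) * u (sx S A)) * (x A * y A))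
          = (∑ S, bPf L α S * (ccf α S A * ccf α S A) * (u (sx S A) * u (sx S A))) * (x A * y A)
          from (Finset.sum_mul _ _ _).symm, this]
      ring
    · rw [show (∑ S, bPf L α S * (ccf α S A * ccf α S B) * (u (sx S A) * u (sx S B)) * (x A * y B))
          = (∑ S, bPf L α S * (ccf α S A * ccf α S B) * (u (sx S A) * u (sx S B))) * (x A * y B)
          from (Finset.sum_mul _ _ _).symm, C1 α (Ne.symm hBA) u, zero_mul]
  rw [Finset.sum_congr rfl fun A _ => inner A, ← Finset.mul_sum]

variable {ι : Type} [Fintype ι]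

/-- the action of the Pfister algebra on the tensor product, columnwise -/
def tmap (α : Fin n → L) (u : (Fin n → Bool) → L) (w : (Fin n → Bool) × ι → L) :
    (Fin n → Bool) × ι → L :=
  fun p => ∑ T, u T * w (sx p.1 T, p.2) * ccf α p.1 T

lemma keyT [CharP L 2] (α : Fin n → L) (u : (Fin n → Bool) → L)
    (w : (Fin n → Bool) × ι → L) (S : Fin n → Bool) (i : ι) :
    tmap α u (tmap α u w) (S, i) = bform α u u * w (S, i) := by
  unfold tmap
  have inner_re : ∀ T : Fin n → Bool,
      (∑ T', u T' * w (sx (sx S T) T', i) * ccf α (sx S T) T')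
        = ∑ C, u (sx T C) * w (sx S C, i) * ccf α (sx S T) (sx T C) := by
    intro T
    refine (Fintype.sum_equiv ((sx_invol T).toPerm) _ _ fun C => ?_).symm
    show u (sx T C) * w (sx S C, i) * ccf α (sx S T) (sx T C)
        = u (sx T C) * w (sx (sx S T) (sx T C), i) * ccf α (sx S T) (sx T C)
    rw [sx4]
  have step : ∀ T : Fin n → Bool,
      u T * (∑ T', u T' * w (sx (sx S T) T', i) * ccf α (sx S T) T') * ccf α S T
        = ∑ C, u T * u (sx T C) * (ccf α S T * ccf α (sx S T) (sx T C)) * w (sx S C, i) := by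
    intro T
    rw [inner_re, Finset.mul_sum, Finset.sum_mul]
    refine Finset.sum_congr rfl fun C _ => ?_
    ring
  rw [show (∑ T, u T * ((fun p => ∑ T', u T' * w (sx p.1 T', p.2) * ccf α p.1 T')
        ((sx S T, i) : (Fin n → Bool) × ι)) * ccf α S T)
      = ∑ T, ∑ C, u T * u (sx T C) * (ccf α S T * ccf α (sx S T) (sx T C)) * w (sx S C, i)
    from Finset.sum_congr rfl fun T _ => step T, Finset.sum_comm]
  rw [Fintype.sum_eq_single (fun _ => false : Fin n → Bool) (fun C hC => ?_)]
  · have : ∀ T : Fin n → Bool,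
        u T * u (sx T fun _ => false) * (ccf α S T * ccf α (sx S T) (sx T fun _ => false))
            * w (sx S fun _ => false, i)
          = bPf L α T * u T * u T * w (S, i) := by
      intro T
      rw [sx_bot, sx_bot, I4]
      ring
    rw [Finset.sum_congr rfl fun T _ => this T, ← Finset.sum_mul]
    rfl
  · -- C ≠ ⊥ : sum over T vanishes
    rw [show (∑ T, u T * u (sx T C) * (ccf α S T * ccf α (sx S T) (sx T C)) * w (sx S C, i))
        = (∑ T, u T * u (sx T C) * (ccf α S T * ccf α (sx S T) (sx T C))) * w (sx S C, i)
      from (Finset.sum_mul _ _ _).symm]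
    have hzero : (∑ T, u T * u (sx T C) * (ccf α S T * ccf α (sx S T) (sx T C))) = 0 := by
      apply Finset.sum_involution (g := fun T _ => sx C T)
      · intro T _
        rw [show sx (sx C T) C = T from sx_cancel C T,
          show ccf α S (sx C T) * ccf α (sx S (sx C T)) T
              = ccf α S T * ccf α (sx S T) (sx T C) from I3 α S T C,
          show sx C T = sx T C from sx_comm C T,
          mul_comm (u (sx T C)) (u T)]
        exact CharTwo.add_self_eq_zero _
      · intro T _ _
        have h := sx_ne (A := C) (B := fun _ => false) hC T
        rwa [sx_bot] at h
      · intro T _; exact Finset.mem_univ _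
      · intro T _; exact sx_sx C T
    rw [hzero, zero_mul]

omit [Fintype ι]

lemma bform_smul (α : Fin n → L) (c : L) (x y : (Fin n → Bool) → L) :
    bform α (c • x) (c • y) = c * c * bform α x y := by
  unfold bform
  rw [Finset.mul_sum]
  refine Finset.sum_congr rfl fun T _ => ?_
  simp only [Pi.smul_apply, smul_eq_mul]
  ring

lemma bPf_bot (α : Fin n → L) : bPf L α (fun _ => false) = 1 := by
  unfold bPf; simp

lemma bPf_single (α : Fin n → L) (i : Fin n) :
    bPf L α (fun j => decide (j = i)) = α i := by
  unfold bPf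
  rw [show (∏ j, if decide (j = i) then α j else 1) = ∏ j, if j = i then α j else 1
    from Finset.prod_congr rfl fun j _ => by by_cases h : j = i <;> simp [h]]
  simp

lemma bPf_sx_single (α : Fin n → L) (i : Fin n) {T : Fin n → Bool} (hT : T i = false) :
    bPf L α (sx T (fun j => decide (j = i))) = α i * bPf L α T := by
  have h1 : bPf L α (sx T (fun j => decide (j = i)))
      = α i * ∏ j ∈ univ.erase i, (if T j then α j else 1) := by
    unfold bPf
    rw [← Finset.mul_prod_erase univ _ (mem_univ i)]
    congr 1
    · rw [show sx T (fun j => decide (j = i)) i = true from by simp [sx, hT]]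
      simp
    · refine Finset.prod_congr rfl fun j hj => ?_
      have hji : j ≠ i := (Finset.mem_erase.mp hj).1
      rw [show sx T (fun k => decide (k = i)) j = T j from by simp [sx, hji]]
  have h2 : bPf L α T = ∏ j ∈ univ.erase i, (if T j then α j else 1) := by
    unfold bPf
    rw [← Finset.mul_prod_erase univ _ (mem_univ i), hT]
    simp
  rw [h1, h2]

/-- splitting the quasi-Pfister form along the i-th slot -/
lemma qb_split [CharP L 2] (α : Fin n → L) (i : Fin n) (x : (Fin n → Bool) → L) :
    bform α x x
      = bform α (fun T => if T i then 0 else x T) (fun T => if T i then 0 else x T)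
        + α i * bform α (fun T => if T i then 0 else x (sx T (fun j => decide (j = i))))
            (fun T => if T i then 0 else x (sx T (fun j => decide (j = i)))) := by
  set σ : Fin n → Bool := fun j => decide (j = i) with hσ
  have hσi : σ i = true := by simp [hσ]
  unfold bform
  have step1 : (∑ T, bPf L α T * x T * x T)
      = ∑ T, (bPf L α T * (if T i then 0 else x T) * (if T i then 0 else x T)
          + if T i then bPf L α T * x T * x T else 0) := by
    refine Finset.sum_congr rfl fun T _ => ?_
    cases hT : T i <;> simp [hT]
  rw [step1, Finset.sum_add_distrib]
  congr 1
  rw [Finset.mul_sum]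
  refine (Fintype.sum_equiv ((sx_invol σ).toPerm) _ _ fun T => ?_).symm
  show α i * (bPf L α T * (if T i then 0 else x (sx T σ)) * (if T i then 0 else x (sx T σ)))
      = if (sx σ T) i then bPf L α (sx σ T) * x (sx σ T) * x (sx σ T) else 0
  cases hT : T i with
  | true =>
    rw [show sx σ T i = false from by simp [sx, hσi, hT]]
    simp [hT]
  | false =>
    rw [show sx σ T i = true from by simp [sx, hσi, hT], if_pos rfl,
      show sx σ T = sx T σ from sx_comm σ T, bPf_sx_single α i hT]
    simp [hT]
    ring

lemma bot_of_all_false {T : Fin n → Bool} (h : ¬ ∃ j, T j = true) : T = fun _ => false := by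
  funext j
  cases hj : T j with
  | false => rfl
  | true => exact absurd ⟨j, hj⟩ h

/-- If the quasi-Pfister form is isotropic over `L`, some slot entry `α i₀` is represented
by the quasi-Pfister form restricted to the subalgebra avoiding slot `i₀`. -/
lemma dichotomy [CharP L 2] (α : Fin n → L) (k : ℕ) (J : Finset (Fin n)) (hk : J.card ≤ k)
    (x : (Fin n → Bool) → L) (hx : x ≠ 0)
    (hsupp : ∀ T : Fin n → Bool, (∃ j, j ∉ J ∧ T j = true) → x T = 0)
    (hq : bform α x x = 0) :
    ∃ (i₀ : Fin n) (u₀ : (Fin n → Bool) → L),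
      (∀ T, T i₀ = true → u₀ T = 0) ∧ bform α u₀ u₀ = α i₀ := by
  induction k generalizing J x with
  | zero =>
    exfalso
    have hk0 : J = ∅ := Finset.card_eq_zero.mp (Nat.le_zero.mp hk)
    subst hk0
    have hx0 : ∀ T : Fin n → Bool, T ≠ (fun _ => false) → x T = 0 := by
      intro T hT
      refine hsupp T ?_
      by_contra h
      exact hT (bot_of_all_false (by simpa [Finset.notMem_empty] using h))
    have : bform α x x = x (fun _ => false) * x (fun _ => false) := by
      unfold bform
      rw [Finset.sum_eq_single (fun _ => false : Fin n → Bool)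
        (fun T _ hT => by rw [hx0 T hT]; ring) (fun h => absurd (mem_univ _) h), bPf_bot, one_mul]
    rw [hq] at this
    apply hx
    funext T
    by_cases hT : T = (fun _ => false)
    · rw [hT]
      exact (mul_self_eq_zero.mp this.symm)
    · exact hx0 T hT
  | succ k ih =>
    rcases Finset.eq_empty_or_nonempty J with hJ | ⟨i, hi⟩
    · exact ih ∅ (Nat.zero_le k) x hx (by rwa [hJ] at hsupp) hq
    set σ : Fin n → Bool := fun j => decide (j = i) with hσ
    set x₀ : (Fin n → Bool) → L := fun T => if T i then 0 else x T with hx₀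
    set y : (Fin n → Bool) → L := fun T => if T i then 0 else x (sx T σ) with hy
    have hsplit : bform α x₀ x₀ + α i * bform α y y = 0 := by
      rw [← qb_split α i x]; exact hq
    have hcard : (J.erase i).card ≤ k := by
      have := Finset.card_erase_of_mem hi
      omega
    by_cases hqy : bform α y y = 0
    · by_cases hx0 : x₀ = 0
      · -- y ≠ 0, recurse with y
        have hyne : y ≠ 0 := by
          intro hy0
          apply hx
          funext T
          cases hT : T i with
          | false =>
            have := congrFun hx0 T
            simpa [hx₀, hT] using this
          | true =>
            have hT' : sx T σ i = false := by simp [sx, hσ, hT]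
            have := congrFun hy0 (sx T σ)
            simp only [hy, hT', Pi.zero_apply, if_neg Bool.false_ne_true] at this
            rwa [show sx (sx T σ) σ = T from by rw [sx_comm (sx T σ) σ, sx_comm T σ, sx_sx]] at this
        refine ih (J.erase i) hcard y hyne (fun T hT => ?_) hqy
        obtain ⟨j, hjJ, hjT⟩ := hT
        by_cases hji : j = i
        · subst hji
          simp [hy, hjT]
        · have hjJ' : j ∉ J := fun h => hjJ (Finset.mem_erase.mpr ⟨hji, h⟩)
          cases hT : T i with
          | true => simp [hy, hT]
          | false =>
            simp only [hy, hT, if_neg Bool.false_ne_true]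
            refine hsupp _ ⟨j, hjJ', ?_⟩
            simp [sx, hσ, hji, hjT]
      · -- x₀ ≠ 0, recurse with x₀
        have hqx0 : bform α x₀ x₀ = 0 := by
          rw [hqy, mul_zero, add_zero] at hsplit; exact hsplit
        refine ih (J.erase i) hcard x₀ hx0 (fun T hT => ?_) hqx0
        obtain ⟨j, hjJ, hjT⟩ := hT
        by_cases hji : j = i
        · subst hji; simp [hx₀, hjT]
        · have hjJ' : j ∉ J := fun h => hjJ (Finset.mem_erase.mpr ⟨hji, h⟩)
          cases hT : T i with
          | true => simp [hx₀, hT]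
          | false =>
            simp only [hx₀, hT, if_neg Bool.false_ne_true]
            exact hsupp _ ⟨j, hjJ', hjT⟩
    · -- bform α y y ≠ 0 : produce the witness
      refine ⟨i, rmul α x₀ ((bform α y y)⁻¹ • y), fun T hT => ?_, ?_⟩
      · unfold rmul
        refine Finset.sum_eq_zero fun W _ => ?_
        cases hW : W i with
        | true => simp [hx₀, hW]
        | false =>
          have hsw : sx T W i = true := by simp [sx, hT, hW]
          have : y (sx T W) = 0 := by simp [hy, hsw]
          simp [this]
      · rw [keyB, bform_smul]
        have hx0y : bform α x₀ x₀ = α i * bform α y y := by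
          have h := hsplit
          rw [add_eq_zero_iff_eq_neg] at h
          rw [h, CharTwo.neg_eq]
        rw [hx0y]
        field_simp


lemma sx_sx_right (T σ : Fin n → Bool) : sx (sx T σ) σ = T := by
  rw [sx_comm (sx T σ) σ, sx_comm T σ, sx_sx]

lemma rmul_add_left (α : Fin n → L) (x x' y : (Fin n → Bool) → L) :
    rmul α (x + x') y = rmul α x y + rmul α x' y := by
  funext S
  simp [rmul, Pi.add_apply, add_mul, Finset.sum_add_distrib]

lemma rmul_add_right (α : Fin n → L) (x y y' : (Fin n → Bool) → L) :
    rmul α x (y + y') = rmul α x y + rmul α x y' := by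
  funext S
  simp [rmul, Pi.add_apply, mul_add, add_mul, Finset.sum_add_distrib]

lemma rmul_smul_right (α : Fin n → L) (c : L) (x y : (Fin n → Bool) → L) :
    rmul α x (c • y) = c • rmul α x y := by
  funext S
  simp only [rmul, Pi.smul_apply, smul_eq_mul, Finset.mul_sum]
  refine Finset.sum_congr rfl fun T _ => ?_
  ring

lemma bform_add_left (α : Fin n → L) (x x' y : (Fin n → Bool) → L) :
    bform α (x + x') y = bform α x y + bform α x' y := by
  unfold bform
  rw [← Finset.sum_add_distrib]
  refine Finset.sum_congr rfl fun T _ => ?_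
  simp [Pi.add_apply]
  ring

lemma bform_add_right (α : Fin n → L) (x y y' : (Fin n → Bool) → L) :
    bform α x (y + y') = bform α x y + bform α x y' := by
  unfold bform
  rw [← Finset.sum_add_distrib]
  refine Finset.sum_congr rfl fun T _ => ?_
  simp [Pi.add_apply]
  ring

lemma bform_comm (α : Fin n → L) (x y : (Fin n → Bool) → L) :
    bform α x y = bform α y x := by
  unfold bform
  refine Finset.sum_congr rfl fun T _ => ?_
  ring

end Aux



section Pair
variable {L : Type} [Field L]

lemma pair_indep {κ : Type} [Fintype κ] (m : κ → κ → L)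
    (hsymm : ∀ k l, m k l = m l k) (hdiag : ∀ k, m k k = 0)
    (r₁ r₂ : κ → κ → Prop) [∀ k l, Decidable (r₁ k l)] [∀ k l, Decidable (r₂ k l)]
    (h₁ : ∀ k l, k ≠ l → m k l ≠ 0 → (r₁ k l ↔ ¬ r₁ l k))
    (h₂ : ∀ k l, k ≠ l → m k l ≠ 0 → (r₂ k l ↔ ¬ r₂ l k))
    (hd₁ : ∀ k, ¬ r₁ k k) (hd₂ : ∀ k, ¬ r₂ k k) :
    (∑ k, ∑ l, if r₁ k l then m k l else 0) = ∑ k, ∑ l, if r₂ k l then m k l else 0 := by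
  rw [← sub_eq_zero, ← Finset.sum_sub_distrib]
  have hsplit : ∀ k : κ, ((∑ l, if r₁ k l then m k l else 0) - ∑ l, if r₂ k l then m k l else 0)
      = ∑ l, ((if r₁ k l then m k l else 0) - (if r₂ k l then m k l else 0)) :=
    fun k => (Finset.sum_sub_distrib _ _).symm
  rw [Finset.sum_congr rfl fun k _ => hsplit k, ← Finset.sum_product']
  apply Finset.sum_involution (g := fun p _ => (p.2, p.1))
  · rintro ⟨k, l⟩ -
    by_cases hkl : k = l
    · subst hkl
      simp [hd₁, hd₂]
    by_cases hm : m k l = 0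
    · have hm' : m l k = 0 := (hsymm l k).trans hm
      simp [hm, hm']
    · have e₁ := h₁ k l hkl hm
      have e₂ := h₂ k l hkl hm
      have hmlk : m l k = m k l := hsymm l k
      have f₁ : r₁ l k ↔ ¬ r₁ k l := by tauto
      have f₂ : r₂ l k ↔ ¬ r₂ k l := by tauto
      by_cases c1 : r₁ k l <;> by_cases c2 : r₂ k l <;>
        simp [c1, c2, f₁, f₂, hmlk] <;> ring
  · rintro ⟨k, l⟩ - hf hswap
    have hlk : l = k := (Prod.ext_iff.mp hswap).1
    subst hlk
    exact hf (by simp [hd₁, hd₂])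
  · rintro ⟨k, l⟩ -
    exact Finset.mem_univ _
  · rintro ⟨k, l⟩ -
    rfl

end Pair

section Main
open Finset QuadraticMap
variable {F : Type} [Field F] {L : Type} [Field L] [Algebra F L]

lemma tmulQ_apply' {κ ι : Type} [Fintype κ] [Fintype ι] (b : κ → F)
    (φ : QuadraticForm F (ι → F)) (v : κ × ι → F) :
    tmulQ F b φ v = ∑ k, b k * φ (fun x => v (k, x)) := by
  unfold tmulQ
  rw [QuadraticMap.sum_apply]
  refine Finset.sum_congr rfl fun k _ => ?_
  rw [QuadraticMap.smul_apply, QuadraticMap.comp_apply, smul_eq_mul]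
  rfl

lemma polar_tmulQ {κ ι : Type} [Fintype κ] [Fintype ι] (b : κ → F)
    (φ : QuadraticForm F (ι → F)) (x y : κ × ι → F) :
    polar (⇑(tmulQ F b φ)) x y
      = ∑ k, b k * polar (⇑φ) (fun i => x (k, i)) (fun i => y (k, i)) := by
  unfold polar
  rw [tmulQ_apply', tmulQ_apply', tmulQ_apply', ← Finset.sum_sub_distrib,
    ← Finset.sum_sub_distrib]
  refine Finset.sum_congr rfl fun k _ => ?_
  have hxy : (fun i => (x + y) (k, i)) = (fun i => x (k, i)) + (fun i => y (k, i)) := rfl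
  rw [hxy]
  ring

lemma single_row {κ ι : Type} [DecidableEq κ] [DecidableEq ι] (S : κ) (i : ι) (T : κ) :
    (fun x : ι => Pi.single (M := fun _ : κ × ι => F) (S, i) 1 (T, x))
      = if T = S then Pi.single i 1 else 0 := by
  by_cases hT : T = S
  · subst hT
    rw [if_pos rfl]
    funext x
    simp [Pi.single_apply, Prod.ext_iff]
  · rw [if_neg hT]
    funext x
    simp [Pi.single_apply, Prod.ext_iff, hT]

lemma tmulQ_single {κ ι : Type} [Fintype κ] [Fintype ι] [DecidableEq κ] [DecidableEq ι]
    (b : κ → F) (φ : QuadraticForm F (ι → F)) (S : κ) (i : ι) :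
    tmulQ F b φ (Pi.single (S, i) 1) = b S * φ (Pi.single i 1) := by
  rw [tmulQ_apply', Fintype.sum_eq_single S (fun k hk => ?_)]
  · rw [single_row, if_pos rfl]
  · rw [single_row, if_neg hk, map_zero, mul_zero]

lemma polar_tmulQ_single {κ ι : Type} [Fintype κ] [Fintype ι] [DecidableEq κ] [DecidableEq ι]
    (b : κ → F) (φ : QuadraticForm F (ι → F)) (S T : κ) (i j : ι) :
    polar (⇑(tmulQ F b φ)) (Pi.single (S, i) 1) (Pi.single (T, j) 1)
      = if S = T then b S * polar (⇑φ) (Pi.single i 1) (Pi.single j 1) else 0 := by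
  rw [polar_tmulQ]
  by_cases hST : S = T
  · subst hST
    rw [if_pos rfl, Fintype.sum_eq_single S (fun k hk => ?_)]
    · rw [single_row, single_row, if_pos rfl, if_pos rfl]
    · rw [single_row, single_row, if_neg hk, if_neg hk, polar_zero_left, mul_zero]
  · rw [if_neg hST]
    refine Finset.sum_eq_zero fun k _ => ?_
    by_cases hkS : k = S
    · subst hkS
      rw [single_row (T := k), single_row (T := k), if_pos rfl, if_neg hST,
        polar_zero_right, mul_zero]
    · rw [single_row (T := k), if_neg hkS, polar_zero_left, mul_zero]

lemma qext_apply {ι' : Type} [Fintype ι'] [DecidableEq ι'] (φ' : QuadraticForm F (ι' → F))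
    (w : ι' → L) :
    qext F φ' L w
      = (∑ i, algebraMap F L (φ' (Pi.single i 1)) * (w i * w i))
        + ∑ i, ∑ j, if (Fintype.equivFin ι') i < (Fintype.equivFin ι') j then
            algebraMap F L (polar (⇑φ') (Pi.single i 1) (Pi.single j 1)) * (w i * w j)
          else 0 := by
  unfold qext
  rw [QuadraticMap.add_apply, QuadraticMap.sum_apply, QuadraticMap.sum_apply]
  congr 1
  · refine Finset.sum_congr rfl fun i _ => ?_
    rw [QuadraticMap.smul_apply, QuadraticMap.linMulLin_apply]
    simp only [LinearMap.proj_apply, smul_eq_mul]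
    congr!
  · refine Finset.sum_congr rfl fun i _ => ?_
    rw [QuadraticMap.sum_apply]
    refine Finset.sum_congr rfl fun j _ => ?_
    by_cases h : (Fintype.equivFin ι') i < (Fintype.equivFin ι') j
    · rw [if_pos h, if_pos h, QuadraticMap.smul_apply, QuadraticMap.linMulLin_apply]
      simp only [LinearMap.proj_apply, smul_eq_mul]
      congr!
    · rw [if_neg h, if_neg h, QuadraticMap.zero_apply]

end Main


section Main2
open Finset QuadraticMap
variable {F : Type} [Field F] {L : Type} [Field L] [Algebra F L]
variable {n : ℕ} {ι : Type} [Fintype ι]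

lemma alg_bPf (a : Fin n → F) (S : Fin n → Bool) :
    algebraMap F L (bPf F a S) = bPf L (fun j => algebraMap F L (a j)) S := by
  unfold bPf
  rw [map_prod]
  refine Finset.prod_congr rfl fun j _ => ?_
  rw [apply_ite (algebraMap F L), map_one]

lemma main_eq [CharP F 2] [DecidableEq ι] (a : Fin n → F) (φ : QuadraticForm F (ι → F))
    (w : ((Fin n → Bool) × ι) → L) :
    qext F (tmulQ F (bPf F a) φ) L w
      = (∑ i, algebraMap F L (φ (Pi.single i 1))
            * bform (fun j => algebraMap F L (a j)) (fun S => w (S, i)) (fun S => w (S, i)))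
        + ∑ i, ∑ j, if (Fintype.equivFin ι) i < (Fintype.equivFin ι) j then
              algebraMap F L (polar (⇑φ) (Pi.single i 1) (Pi.single j 1))
                * bform (fun j' => algebraMap F L (a j')) (fun S => w (S, i)) (fun S => w (S, j))
            else 0 := by
  classical
  rw [qext_apply]
  congr 1
  · -- diagonal part
    rw [Fintype.sum_prod_type, Finset.sum_comm]
    refine Finset.sum_congr rfl fun i _ => ?_
    unfold bform
    rw [Finset.mul_sum]
    refine Finset.sum_congr rfl fun S _ => ?_
    rw [tmulQ_single, map_mul, alg_bPf]
    ring
  · -- polar part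
    have coefrw : ∀ p q : (Fin n → Bool) × ι,
        algebraMap F L (polar (⇑(tmulQ F (bPf F a) φ)) (Pi.single p 1) (Pi.single q 1))
          = if p.1 = q.1 then
              bPf L (fun j => algebraMap F L (a j)) p.1
                * algebraMap F L (polar (⇑φ) (Pi.single p.2 1) (Pi.single q.2 1))
            else 0 := by
      rintro ⟨S, i⟩ ⟨T, j⟩
      rw [polar_tmulQ_single, apply_ite (algebraMap F L), map_zero, map_mul, alg_bPf]
    have step1 : (∑ p : (Fin n → Bool) × ι, ∑ q : (Fin n → Bool) × ι,
          if (Fintype.equivFin ((Fin n → Bool) × ι)) p < (Fintype.equivFin ((Fin n → Bool) × ι)) q then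
            algebraMap F L (polar (⇑(tmulQ F (bPf F a) φ)) (Pi.single p 1) (Pi.single q 1))
              * (w p * w q)
          else 0)
        = ∑ p : (Fin n → Bool) × ι, ∑ q : (Fin n → Bool) × ι,
          if (Fintype.equivFin ((Fin n → Bool) × ι)) p < (Fintype.equivFin ((Fin n → Bool) × ι)) q then
            ((if p.1 = q.1 then
              bPf L (fun j => algebraMap F L (a j)) p.1
                * algebraMap F L (polar (⇑φ) (Pi.single p.2 1) (Pi.single q.2 1)) else 0)
              * (w p * w q))
          else 0 := by
      refine Finset.sum_congr rfl fun p _ => Finset.sum_congr rfl fun q _ => ?_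
      rw [coefrw]
    rw [step1]
    -- now apply pair_indep
    set m : ((Fin n → Bool) × ι) → ((Fin n → Bool) × ι) → L := fun p q =>
      (if p.1 = q.1 then
          bPf L (fun j => algebraMap F L (a j)) p.1
            * algebraMap F L (polar (⇑φ) (Pi.single p.2 1) (Pi.single q.2 1)) else 0)
        * (w p * w q) with hm
    have hsymm : ∀ p q, m p q = m q p := by
      intro p q
      rw [hm]
      by_cases h : p.1 = q.1
      · simp only [if_pos h, if_pos h.symm, ← h]
        rw [polar_comm]
        ring
      · simp only [if_neg h, if_neg (Ne.symm h), zero_mul]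
    have hdiag : ∀ p, m p p = 0 := by
      intro p
      have hps : polar (⇑φ) (Pi.single p.2 1) (Pi.single p.2 (1:F)) = 0 := by
        rw [QuadraticMap.polar_self, two_smul, CharTwo.add_self_eq_zero]
      rw [hm]
      simp [hps]
    have key := pair_indep m hsymm hdiag
      (fun p q => (Fintype.equivFin ((Fin n → Bool) × ι)) p < (Fintype.equivFin ((Fin n → Bool) × ι)) q)
      (fun p q => p.1 = q.1 ∧ (Fintype.equivFin ι) p.2 < (Fintype.equivFin ι) q.2)
      (fun p q hpq _ => by
        have h : (Fintype.equivFin ((Fin n → Bool) × ι)) p ≠ (Fintype.equivFin ((Fin n → Bool) × ι)) q :=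
          fun h => hpq (Equiv.injective _ h)
        constructor
        · intro hlt hlt'; exact lt_asymm hlt hlt'
        · intro hn; exact h.lt_or_gt.resolve_right hn)
      (fun p q hpq hmne => by
        have h1 : p.1 = q.1 := by
          by_contra hc
          exact hmne (by rw [hm]; simp [hc])
        have h2 : p.2 ≠ q.2 := fun hc => hpq (Prod.ext h1 hc)
        have h3 : (Fintype.equivFin ι) p.2 ≠ (Fintype.equivFin ι) q.2 :=
          fun h => h2 (Equiv.injective _ h)
        constructor
        · rintro ⟨-, hlt⟩ ⟨-, hlt'⟩; exact lt_asymm hlt hlt'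
        · intro hn
          refine ⟨h1, ?_⟩
          rcases h3.lt_or_gt with h | h
          · exact h
          · exact absurd ⟨h1.symm, h⟩ hn)
      (fun p => lt_irrefl _)
      (fun p => fun h => lt_irrefl _ h.2)
    rw [key]
    -- now collapse the q-sum over the first coordinate
    rw [Fintype.sum_prod_type]
    have inner : ∀ (S : Fin n → Bool) (i : ι),
        (∑ q : (Fin n → Bool) × ι,
          if ((S, i) : (Fin n → Bool) × ι).1 = q.1 ∧ (Fintype.equivFin ι) ((S,i) : (Fin n → Bool) × ι).2 < (Fintype.equivFin ι) q.2 then m (S, i) q else 0)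
          = ∑ j, if (Fintype.equivFin ι) i < (Fintype.equivFin ι) j then m (S, i) (S, j) else 0 := by
      intro S i
      rw [Fintype.sum_prod_type, Finset.sum_comm]
      refine Finset.sum_congr rfl fun j _ => ?_
      have : ∀ T : Fin n → Bool,
          (if ((S,i) : (Fin n → Bool) × ι).1 = (T, j).1 ∧ (Fintype.equivFin ι) i < (Fintype.equivFin ι) j then m (S,i) (T,j) else 0)
            = if S = T then (if (Fintype.equivFin ι) i < (Fintype.equivFin ι) j then m (S,i) (T,j) else 0) else 0 := by
        intro T
        by_cases hST : S = T <;> by_cases hij : (Fintype.equivFin ι) i < (Fintype.equivFin ι) j <;>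
          simp [hST, hij]
      rw [Finset.sum_congr rfl fun T _ => this T, Finset.sum_ite_eq]
      simp
    rw [Finset.sum_congr rfl fun S _ => Finset.sum_congr rfl fun i _ => inner S i]
    -- final reshuffle : Σ_S Σ_i Σ_j ite (m) = Σ_i Σ_j ite (coef * bform)
    rw [Finset.sum_comm]
    refine Finset.sum_congr rfl fun i _ => ?_
    rw [Finset.sum_comm]
    refine Finset.sum_congr rfl fun j _ => ?_
    by_cases hij : (Fintype.equivFin ι) i < (Fintype.equivFin ι) j
    · rw [if_pos hij]
      unfold bform
      rw [Finset.mul_sum]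
      refine Finset.sum_congr rfl fun S _ => ?_
      rw [if_pos hij, hm]
      simp only [eq_self_iff_true, if_true]
      ring
    · rw [if_neg hij]
      refine Finset.sum_eq_zero fun S _ => ?_
      rw [if_neg hij]

end Main2


section Main3
open Finset QuadraticMap
variable {F : Type} [Field F] {L : Type} [Field L] [Algebra F L]
variable {n : ℕ} {ι : Type} [Fintype ι]

lemma psi_scale [CharP F 2] [DecidableEq ι] (a : Fin n → F) (φ : QuadraticForm F (ι → F))
    (u : (Fin n → Bool) → L) (w : ((Fin n → Bool) × ι) → L) :
    qext F (tmulQ F (bPf F a) φ) L (tmap (fun j => algebraMap F L (a j)) u w)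
      = bform (fun j => algebraMap F L (a j)) u u * qext F (tmulQ F (bPf F a) φ) L w := by
  haveI : CharP L 2 := charP_of_injective_algebraMap (algebraMap F L).injective 2
  rw [main_eq, main_eq, mul_add]
  simp only [Finset.mul_sum]
  congr 1
  · refine Finset.sum_congr rfl fun i _ => ?_
    rw [show (fun S => tmap (fun j => algebraMap F L (a j)) u w (S, i))
        = rmul (fun j => algebraMap F L (a j)) u (fun S => w (S, i)) from rfl, keyB]
    ring
  · refine Finset.sum_congr rfl fun i _ => Finset.sum_congr rfl fun j _ => ?_
    by_cases hij : (Fintype.equivFin ι) i < (Fintype.equivFin ι) j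
    · rw [if_pos hij, if_pos hij,
        show (fun S => tmap (fun j' => algebraMap F L (a j')) u w (S, i))
          = rmul (fun j' => algebraMap F L (a j')) u (fun S => w (S, i)) from rfl,
        show (fun S => tmap (fun j' => algebraMap F L (a j')) u w (S, j))
          = rmul (fun j' => algebraMap F L (a j')) u (fun S => w (S, j)) from rfl, keyB]
      ring
    · rw [if_neg hij, if_neg hij, mul_zero]

end Main3

open Finset QuadraticMap in
/-- if `π` is an anisotropic `n`-fold bilinear Pfister form and `φ` a form
of dimension `≥ 2` with `π⊗φ` anisotropic, then `i₁(π⊗φ) ≥ dim π = 2ⁿ`,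
i.e. the total isotropy index of `π⊗φ` over its own function field is at least `2ⁿ`. -/
theorem stmt2 (F : Type) [Field F] [CharP F 2] {ι : Type} [Fintype ι]
    (φ : QuadraticForm F (ι → F)) (hdim : 2 ≤ Fintype.card ι)
    {n : ℕ} (a : Fin n → F) (hπan : BAnisotropic F (bPf F a))
    (han : (tmulQ F (bPf F a) φ).Anisotropic)
    (L : Type) [Field L] [Algebra F L]
    (hL : IsFunctionField F (tmulQ F (bPf F a) φ) L) :
    2 ^ n ≤ iT L (qext F (tmulQ F (bPf F a) φ) L) := by
  classical
  haveI : CharP L 2 := charP_of_injective_algebraMap (algebraMap F L).injective 2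
  obtain ⟨v, hv0, ⟨⟨S₀, j₀⟩, hp₀⟩, -, -⟩ := hL
  have main : ∃ U : Submodule L (((Fin n → Bool) × ι) → L),
      2 ^ n ≤ Module.finrank L U ∧ ∀ w ∈ U, qext F (tmulQ F (bPf F a) φ) L w = 0 := by
    by_cases hiso : ∀ u : (Fin n → Bool) → L, bform (fun j => algebraMap F L (a j)) u u = 0 → u = 0
    · -- Case A : the quasi-Pfister form stays anisotropic over L
      set Λ : ((Fin n → Bool) → L) →ₗ[L] (((Fin n → Bool) × ι) → L) :=
        { toFun := fun u => tmap (fun j => algebraMap F L (a j)) u v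
          map_add' := fun u u' => by
            funext p
            simp [tmap, add_mul, Finset.sum_add_distrib]
          map_smul' := fun c u => by
            funext p
            simp only [tmap, Pi.smul_apply, smul_eq_mul, RingHom.id_apply, Finset.mul_sum]
            refine Finset.sum_congr rfl fun T _ => ?_
            ring } with hΛ
      have hker : ∀ u, Λ u = 0 → u = 0 := by
        intro u hu
        apply hiso u
        have hu' : tmap (fun j => algebraMap F L (a j)) u v = 0 := hu
        have h3 := keyT (fun j => algebraMap F L (a j)) u v S₀ j₀
        rw [hu'] at h3
        have h4 : tmap (fun j => algebraMap F L (a j)) u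
            (0 : ((Fin n → Bool) × ι) → L) (S₀, j₀) = 0 := by
          simp [tmap]
        rw [h4, hp₀, mul_one] at h3
        exact h3.symm
      have hinj : Function.Injective Λ := by
        rw [← LinearMap.ker_eq_bot, eq_bot_iff]
        intro u hu
        exact hker u hu
      refine ⟨LinearMap.range Λ, ?_, ?_⟩
      · rw [LinearMap.finrank_range_of_inj hinj, Module.finrank_fintype_fun_eq_card,
          Fintype.card_fun]
        simp
      · rintro w ⟨u, rfl⟩
        show qext F (tmulQ F (bPf F a) φ) L (tmap (fun j => algebraMap F L (a j)) u v) = 0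
        rw [psi_scale, hv0, mul_zero]
    · -- Case B : the quasi-Pfister form becomes isotropic over L
      push_neg at hiso
      obtain ⟨u, hqu, hune⟩ := hiso
      obtain ⟨i₀, u₀, hsupp₀, hval₀⟩ :=
        dichotomy (fun j => algebraMap F L (a j)) n univ (by simp) u hune
          (fun T hT => absurd (mem_univ hT.choose) hT.choose_spec.1) hqu
      set σ : Fin n → Bool := fun j => decide (j = i₀) with hσ
      set ee : (Fin n → Bool) → L := fun T => if T = σ then 1 else 0 with hee
      set z : (Fin n → Bool) → L := ee + u₀ with hz
      have hσi : σ i₀ = true := by simp [hσ]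
      have hbe : bform (fun j => algebraMap F L (a j)) ee ee = algebraMap F L (a i₀) := by
        unfold bform
        rw [Finset.sum_eq_single σ (fun T _ hT => by simp [hee, hT])
          (fun h => absurd (mem_univ _) h)]
        rw [hσ, bPf_single]
        simp [hee, hσ]
      have hmix : ∀ xx : (Fin n → Bool) → L, (∀ T, T i₀ = true → xx T = 0) →
          bform (fun j => algebraMap F L (a j)) ee xx = 0 := by
        intro xx hxx
        refine Finset.sum_eq_zero fun T _ => ?_
        by_cases hT : T = σ
        · subst hT
          rw [hxx σ hσi]
          ring
        · simp [hee, hT]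
      have hqz : bform (fun j => algebraMap F L (a j)) z z = 0 := by
        rw [hz, bform_add_left, bform_add_right, bform_add_right, hbe,
          hmix u₀ hsupp₀, bform_comm _ u₀ ee, hmix u₀ hsupp₀, hval₀]
        rw [add_zero, zero_add]
        exact CharTwo.add_self_eq_zero _
      -- extension-by-zero of functions on the subtype
      set ext : ({T : Fin n → Bool // T i₀ = false} → L) → ((Fin n → Bool) → L) :=
        fun d T => if hT : T i₀ = false then d ⟨T, hT⟩ else 0 with hext
      have hext_add : ∀ d d', ext (d + d') = ext d + ext d' := by
        intro d d'
        funext T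
        by_cases hT : T i₀ = false <;> simp [hext, hT]
      have hext_smul : ∀ (c : L) d, ext (c • d) = c • ext d := by
        intro c d
        funext T
        by_cases hT : T i₀ = false <;> simp [hext, hT]
      set Θ : (({T : Fin n → Bool // T i₀ = false} × ι) → L) →ₗ[L]
          (((Fin n → Bool) × ι) → L) :=
        { toFun := fun d p => rmul (fun j => algebraMap F L (a j)) z
            (ext (fun t => d (t, p.2))) p.1
          map_add' := fun d d' => by
            funext p
            have h1 : (fun t => (d + d') (t, p.2)) = (fun t => d (t, p.2)) + fun t => d' (t, p.2) := rfl
            show rmul (fun j => algebraMap F L (a j)) z (ext fun t => (d + d') (t, p.2)) p.1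
                = rmul (fun j => algebraMap F L (a j)) z (ext fun t => d (t, p.2)) p.1
                  + rmul (fun j => algebraMap F L (a j)) z (ext fun t => d' (t, p.2)) p.1
            rw [h1, hext_add, rmul_add_right]
            rfl
          map_smul' := fun c d => by
            funext p
            have h1 : (fun t => (c • d) (t, p.2)) = c • fun t => d (t, p.2) := rfl
            show rmul (fun j => algebraMap F L (a j)) z (ext fun t => (c • d) (t, p.2)) p.1
                = (c • rmul (fun j => algebraMap F L (a j)) z (ext fun t => d (t, p.2))) p.1
            rw [h1, hext_smul, rmul_smul_right] } with hΘ
      have hinjx : ∀ x : (Fin n → Bool) → L, (∀ T, T i₀ = true → x T = 0) →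
          rmul (fun j => algebraMap F L (a j)) z x = 0 → x = 0 := by
        intro x hx hm
        funext T
        cases hT : T i₀ with
        | true => exact hx T hT
        | false =>
          have hS : sx T σ i₀ = true := by simp [sx, hσi, hT]
          have h0 := congrFun hm (sx T σ)
          rw [hz, rmul_add_left] at h0
          have h1 : rmul (fun j => algebraMap F L (a j)) ee x (sx T σ) = x T := by
            unfold rmul
            rw [Finset.sum_eq_single σ (fun W _ hW => by simp [hee, hW])
              (fun h => absurd (mem_univ _) h)]
            rw [hee]
            simp only [eq_self_iff_true, if_true, one_mul]
            rw [sx_sx_right]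
            have hcc : ccf (fun j => algebraMap F L (a j)) (sx T σ) σ = 1 := by
              unfold ccf
              refine Finset.prod_eq_one fun j _ => ?_
              by_cases hj : j = i₀
              · subst hj
                rw [show sx T σ j = true from hS]
                simp
              · simp [hσ, hj]
            rw [hcc, mul_one]
          have h2 : rmul (fun j => algebraMap F L (a j)) u₀ x (sx T σ) = 0 := by
            refine Finset.sum_eq_zero fun W _ => ?_
            cases hW : W i₀ with
            | true => rw [hsupp₀ W hW]; ring
            | false =>
              have : sx (sx T σ) W i₀ = true := by
                rw [show sx (sx T σ) W i₀ = xor (sx T σ i₀) (W i₀) from rfl, hS, hW]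
                decide
              rw [hx _ this]
              ring
          rw [Pi.add_apply, h1, h2, add_zero] at h0
          exact h0
      have hker : ∀ d, Θ d = 0 → d = 0 := by
        intro d hd
        have hcol : ∀ i : ι, ext (fun t => d (t, i)) = 0 := by
          intro i
          refine hinjx _ (fun T hT => ?_) ?_
          · have : ¬ T i₀ = false := by simp [hT]
            simp [hext, this]
          · funext S
            exact congrFun hd (S, i)
        funext q
        have h5 := congrFun (hcol q.2) q.1.val
        rw [hext] at h5
        simp only [q.1.prop, dif_pos, Subtype.coe_eta, Pi.zero_apply] at h5
        rw [show q = (q.1, q.2) from rfl]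
        exact h5
      have hinj : Function.Injective Θ := by
        rw [← LinearMap.ker_eq_bot, eq_bot_iff]
        intro d hd
        exact hker d hd
      refine ⟨LinearMap.range Θ, ?_, ?_⟩
      · rw [LinearMap.finrank_range_of_inj hinj, Module.finrank_fintype_fun_eq_card,
          Fintype.card_prod]
        have e : {T : Fin n → Bool // T i₀ = false} ≃ ({j : Fin n // ¬ j = i₀} → Bool) :=
          { toFun := fun T j => T.val j.val
            invFun := fun g => ⟨fun j => if h : j = i₀ then false else g ⟨j, h⟩, by simp⟩
            left_inv := fun T => by
              apply Subtype.ext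
              funext j
              by_cases hj : j = i₀
              · subst hj
                simp [T.prop]
              · simp [hj]
            right_inv := fun g => by
              funext j
              simp [j.prop] }
        have hcards : Fintype.card {T : Fin n → Bool // T i₀ = false} = 2 ^ (n - 1) := by
          rw [Fintype.card_congr e, Fintype.card_fun, Fintype.card_bool,
            Fintype.card_subtype_compl, Fintype.card_subtype_eq, Fintype.card_fin]
        rw [hcards]
        have hn1 : 1 ≤ n := i₀.pos
        calc 2 ^ n = 2 ^ (n - 1) * 2 := by
              rw [← pow_succ, Nat.sub_add_cancel hn1]
          _ ≤ 2 ^ (n - 1) * Fintype.card ι := Nat.mul_le_mul_left _ hdim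
      · rintro w ⟨d, rfl⟩
        have hB : ∀ i j : ι,
            bform (fun j' => algebraMap F L (a j')) (fun S => Θ d (S, i)) (fun S => Θ d (S, j)) = 0 := by
          intro i j
          rw [show (fun S => Θ d (S, i)) = rmul (fun j' => algebraMap F L (a j')) z
              (ext (fun t => d (t, i))) from rfl,
            show (fun S => Θ d (S, j)) = rmul (fun j' => algebraMap F L (a j')) z
              (ext (fun t => d (t, j))) from rfl, keyB, hqz, zero_mul]
        rw [main_eq]
        rw [Finset.sum_congr rfl fun i _ => by rw [hB i i, mul_zero]]
        rw [Finset.sum_congr rfl fun i (_ : i ∈ univ) => Finset.sum_congr rfl fun j (_ : j ∈ univ) => by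
          rw [show (if (Fintype.equivFin ι) i < (Fintype.equivFin ι) j then
              algebraMap F L (polar (⇑φ) (Pi.single i 1) (Pi.single j 1))
                * bform (fun j' => algebraMap F L (a j')) (fun S => Θ d (S, i)) (fun S => Θ d (S, j))
            else 0) = 0 from by rw [hB i j, mul_zero, ite_self]]]
        simp
  obtain ⟨U, hU1, hU2⟩ := main
  have hbdd : BddAbove {d | ∃ U' : Submodule L (((Fin n → Bool) × ι) → L),
      Module.finrank L U' = d ∧ ∀ v' ∈ U', qext F (tmulQ F (bPf F a) φ) L v' = 0} := by
    refine ⟨Module.finrank L (((Fin n → Bool) × ι) → L), ?_⟩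
    rintro d ⟨U', hd, -⟩
    rw [← hd]
    exact U'.finrank_le
  have hmem : Module.finrank L U ∈ {d | ∃ U' : Submodule L (((Fin n → Bool) × ι) → L),
      Module.finrank L U' = d ∧ ∀ v' ∈ U', qext F (tmulQ F (bPf F a) φ) L v' = 0} :=
    ⟨U, rfl, hU2⟩
  exact le_trans hU1 (le_csSup hbdd hmem)


end Char2QF
end
end

section
/- Let F be a field of characteristic 2, let ψ be an anisotropic quadratic form over F, and let π = ⟨1,a⟩_b be an anisotropic 1-fold bilinear Pfister form over F. If π⊗ψ ≅ ψ ⊥ aψ is isotropic, then there exists an anisotropic binary quadratic form μ dominated by ψ such that either (i) μ is nonsingular (μ ≅ [x,y]) and the Witt index of π⊗μ is 2, or (ii) μ is totally singular (μ ≅ ⟨x,y⟩) and the defect of π⊗μ is 2. Moreover, if the defect of π⊗ψ is positive, then μ can be chosen to satisfy (ii). -/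
/- Common framework: quadratic forms over fields of characteristic 2,
represented as `QuadraticForm F (ι → F)` for a finite index type `ι`
(dimension = `Fintype.card ι`), diagonal bilinear forms represented by
their vectors of diagonal entries, isotropy indices, function fields of
quadrics (characterized up to isomorphism), etc. -/

noncomputable section
namespace Char2QF

open QuadraticMap Module

variable {F : Type} [Field F]

lemma mem_quadRadical {V : Type} [AddCommGroup V] [Module F V] (φ : QuadraticForm F V)
    (z : V) : z ∈ quadRadical F φ ↔ (∀ w, polar φ z w = 0) ∧ φ z = 0 := Iff.rfl

/-- linear map `(α,β) ↦ α • u + β • u'`. -/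
def pairMap {ι : Type} (u u' : ι → F) : (Bool → F) →ₗ[F] (ι → F) :=
  LinearMap.smulRight (LinearMap.proj false) u + LinearMap.smulRight (LinearMap.proj true) u'

lemma pairMap_apply {ι : Type} (u u' : ι → F) (c : Bool → F) (i : ι) :
    pairMap u u' c i = c false * u i + c true * u' i := rfl

lemma pairMap_eq {ι : Type} (u u' : ι → F) (c : Bool → F) :
    pairMap u u' c = c false • u + c true • u' := rfl

lemma tmulQ_bool_apply {κ : Type} [Fintype κ] (a : F) (q : QuadraticForm F (κ → F))
    (z : Bool × κ → F) :
    tmulQ F (bPf1 F a) q z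
      = q (fun i => z (false, i)) + a * q (fun i => z (true, i)) := by
  simp [tmulQ, Fintype.sum_bool, bPf1, LinearMap.funLeft_apply, Function.comp]
  exact add_comm _ _

lemma polar_tmulQ_bool {κ : Type} [Fintype κ] (a : F) (q : QuadraticForm F (κ → F))
    (z y : Bool × κ → F) :
    polar (tmulQ F (bPf1 F a) q) z y
      = polar q (fun i => z (false, i)) (fun i => y (false, i))
        + a * polar q (fun i => z (true, i)) (fun i => y (true, i)) := by
  have h1 : (fun i => (z + y) (false, i))
      = (fun i => z (false, i)) + (fun i => y (false, i)) := rfl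
  have h2 : (fun i => (z + y) (true, i))
      = (fun i => z (true, i)) + (fun i => y (true, i)) := rfl
  simp only [polar, tmulQ_bool_apply, h1, h2]
  ring

lemma map_comb {κ : Type} [Fintype κ] (q : QuadraticForm F (κ → F)) (v w : κ → F) (α β : F) :
    q (α • v + β • w) = α * α * q v + α * β * polar q v w + β * β * q w := by
  have h : q (α • v + β • w) = polar q (α • v) (β • w) + q (α • v) + q (β • w) := by
    simp only [polar]; ring
  rw [h, polar_smul_left, polar_smul_right, QuadraticMap.map_smul, QuadraticMap.map_smul]
  simp only [smul_eq_mul]; ring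

section char2
variable [CharP F 2]

lemma two_eq_zero' : (2 : F) = 0 := by
  have := CharP.cast_eq_zero F 2
  exact_mod_cast this

lemma hker_of {a : F} (hπan : BAnisotropic F (bPf1 F a)) :
    ∀ s t : F, s * s + a * (t * t) = 0 → s = 0 ∧ t = 0 := by
  intro s t h
  have hv : (fun r : Bool => cond r t s) = 0 := by
    apply hπan
    simp [diagPair, Fintype.sum_bool, bPf1]
    linear_combination h
  exact ⟨by simpa using congrFun hv false, by simpa using congrFun hv true⟩

lemma a_ne_zero {a : F} (hπan : BAnisotropic F (bPf1 F a)) : a ≠ 0 := by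
  intro h
  exact one_ne_zero ((hker_of hπan 0 1 (by rw [h]; ring)).2)

end char2

/-- The binary form `μ` obtained by restricting `ψ` to the span of `v, w`. -/
def muOf {κ : Type} [Fintype κ] (ψ : QuadraticForm F (κ → F)) (v w : κ → F) :
    QuadraticForm F (Bool → F) :=
  ψ.comp (pairMap v w)

lemma muOf_apply {κ : Type} [Fintype κ] (ψ : QuadraticForm F (κ → F)) (v w : κ → F)
    (c : Bool → F) :
    muOf ψ v w c
      = c false * c false * ψ v + c false * c true * polar ψ v w + c true * c true * ψ w := by
  rw [muOf, QuadraticMap.comp_apply, pairMap_eq, map_comb]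

lemma polar_muOf [CharP F 2] {κ : Type} [Fintype κ] (ψ : QuadraticForm F (κ → F))
    (v w : κ → F) (c d : Bool → F) :
    polar (muOf ψ v w) c d
      = polar ψ v w * (c false * d true + c true * d false) := by
  have h2 : (2 : F) = 0 := two_eq_zero'
  simp only [polar, muOf_apply, Pi.add_apply]
  linear_combination (c false * d false * ψ v + c true * d true * ψ w) * h2

section withchar
variable [CharP F 2] {κ : Type} [Fintype κ]

lemma QOf_apply (a : F) (ψ : QuadraticForm F (κ → F)) (v w : κ → F) (z : Bool × Bool → F) :
    tmulQ F (bPf1 F a) (muOf ψ v w) z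
      = z (false, false) * z (false, false) * ψ v
        + z (false, false) * z (false, true) * polar ψ v w
        + z (false, true) * z (false, true) * ψ w
        + a * (z (true, false) * z (true, false) * ψ v
            + z (true, false) * z (true, true) * polar ψ v w
            + z (true, true) * z (true, true) * ψ w) := by
  rw [tmulQ_bool_apply, muOf_apply, muOf_apply]

lemma polar_QOf (a : F) (ψ : QuadraticForm F (κ → F)) (v w : κ → F) (z y : Bool × Bool → F) :
    polar (tmulQ F (bPf1 F a) (muOf ψ v w)) z y
      = polar ψ v w * (z (false, false) * y (false, true) + z (false, true) * y (false, false))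
        + a * (polar ψ v w
            * (z (true, false) * y (true, true) + z (true, true) * y (true, false))) := by
  rw [polar_tmulQ_bool, polar_muOf, polar_muOf]

lemma pairMap_inj (ψ : QuadraticForm F (κ → F)) (hψan : ψ.Anisotropic) {a : F}
    (hπan : BAnisotropic F (bPf1 F a)) (v w : κ → F) (hw : w ≠ 0) (hvw : ψ v = a * ψ w) :
    Function.Injective (pairMap v w) := by
  have h2 : (2 : F) = 0 := two_eq_zero'
  have hx : ψ w ≠ 0 := fun h => hw (hψan w h)
  intro c d hcd
  have h0 : pairMap v w (c - d) = 0 := by rw [_root_.map_sub, hcd, sub_self]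
  suffices hc : c - d = 0 by
    exact sub_eq_zero.mp hc
  set α := (c - d) false with hα
  set β := (c - d) true with hβ
  have h1 : α • v + β • w = 0 := by rw [← pairMap_eq]; exact h0
  have h3 : α • v = β • w := by
    have := eq_neg_of_add_eq_zero_left h1
    rw [this, ← neg_smul, CharTwo.neg_eq]
  have h4 : α * α * ψ v = β * β * ψ w := by
    have := congrArg ψ h3
    rwa [QuadraticMap.map_smul, QuadraticMap.map_smul, smul_eq_mul, smul_eq_mul] at this
  have h5 : α * α * a = β * β := by
    have h6 : (α * α * a) * ψ w = (β * β) * ψ w := by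
      rw [← h4, hvw]; ring
    exact mul_right_cancel₀ hx h6
  have h7 := hker_of hπan β α (by linear_combination a * (α * α) * h2 - h5)
  funext r
  cases r
  · exact h7.2
  · exact h7.1

lemma muOf_ani_dom (ψ : QuadraticForm F (κ → F)) (hψan : ψ.Anisotropic) {a : F}
    (hπan : BAnisotropic F (bPf1 F a)) (v w : κ → F) (hw : w ≠ 0) (hvw : ψ v = a * ψ w) :
    (muOf ψ v w).Anisotropic ∧ Dominates F ψ (muOf ψ v w) := by
  have hinj := pairMap_inj ψ hψan hπan v w hw hvw
  constructor
  · intro c hc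
    have h0 : pairMap v w c = 0 := hψan _ hc
    exact hinj (by rw [h0, map_zero])
  · exact ⟨pairMap v w, hinj, fun c => rfl⟩

lemma caseTS (ψ : QuadraticForm F (κ → F)) (hψan : ψ.Anisotropic) {a : F}
    (hπan : BAnisotropic F (bPf1 F a)) (v w : κ → F) (hw : w ≠ 0) (hvw : ψ v = a * ψ w)
    (hb : polar ψ v w = 0) :
    TotallySingular F (muOf ψ v w) ∧ iD F (tmulQ F (bPf1 F a) (muOf ψ v w)) = 2 := by
  have h2 : (2 : F) = 0 := two_eq_zero'
  have hx : ψ w ≠ 0 := fun h => hw (hψan w h)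
  set Q := tmulQ F (bPf1 F a) (muOf ψ v w) with hQ
  constructor
  · intro c d; rw [polar_muOf, hb]; ring
  set u2 : Bool × Bool → F := fun p => cond p.1 (cond p.2 0 1) (cond p.2 a 0) with hu2
  set u2' : Bool × Bool → F := fun p => cond p.1 (cond p.2 1 0) (cond p.2 0 1) with hu2'
  have hrad : quadRadical F Q = LinearMap.range (pairMap u2 u2') := by
    ext z
    rw [mem_quadRadical, LinearMap.mem_range]
    constructor
    · rintro ⟨hpol, hz0⟩
      rw [hQ, QOf_apply, hvw, hb] at hz0
      have hE' : (a * (z (false,false) * z (false,false)) + z (false,true) * z (false,true)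
          + a * a * (z (true,false) * z (true,false))
          + a * (z (true,true) * z (true,true))) * ψ w = 0 * ψ w := by
        linear_combination hz0
      have hE := mul_right_cancel₀ hx hE'
      have hst := hker_of hπan (z (false,true) + a * z (true,false))
        (z (false,false) + z (true,true))
        (by linear_combination hE + (a * (z (false,true) * z (true,false))
            + a * (z (false,false) * z (true,true))) * h2)
      have hs : z (false,true) = a * z (true,false) := by
        linear_combination hst.1 - (a * z (true,false)) * h2
      have ht : z (false,false) = z (true,true) := by
        linear_combination hst.2 - z (true,true) * h2
      refine ⟨fun r => cond r (z (false,false)) (z (true,false)), ?_⟩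
      funext p
      obtain ⟨s, t⟩ := p
      rw [pairMap_apply]
      cases s <;> cases t <;>
        simp [hu2, hu2'] <;>
        first
          | rfl
          | (linear_combination hs)
          | (linear_combination ht)
          | (linear_combination hs.symm)
          | (linear_combination ht.symm)
          | (linear_combination ht - hs)
          | (linear_combination hs - ht)
    · rintro ⟨c, rfl⟩
      constructor
      · intro y; rw [hQ, polar_QOf, hb]; ring
      · rw [hQ, QOf_apply, hvw, hb]
        simp only [pairMap_apply, hu2, hu2', Bool.cond_true, Bool.cond_false]
        linear_combination (a * (c true * c true) * ψ w
          + a * a * (c false * c false) * ψ w) * h2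
  have hinj2 : Function.Injective (pairMap u2 u2') := by
    intro c d hcd
    have e1 := congrFun hcd (true, false)
    have e2 := congrFun hcd (true, true)
    simp only [pairMap_apply, hu2, hu2', Bool.cond_true, Bool.cond_false,
      mul_zero, mul_one, zero_add, add_zero] at e1 e2
    funext r
    cases r
    · exact e1
    · exact e2
  show Module.finrank F (quadRadical F Q) = 2
  rw [hrad, LinearMap.finrank_range_of_inj hinj2]
  simp [Module.finrank_pi]

lemma caseNS (ψ : QuadraticForm F (κ → F)) (hψan : ψ.Anisotropic) {a : F}
    (hπan : BAnisotropic F (bPf1 F a)) (v w : κ → F) (hw : w ≠ 0) (hvw : ψ v = a * ψ w)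
    (hb : polar ψ v w ≠ 0) :
    Nonsingular F (muOf ψ v w) ∧ iW F (tmulQ F (bPf1 F a) (muOf ψ v w)) = 2 := by
  have h2 : (2 : F) = 0 := two_eq_zero'
  have ha : a ≠ 0 := a_ne_zero hπan
  have hx : ψ w ≠ 0 := fun h => hw (hψan w h)
  set Q := tmulQ F (bPf1 F a) (muOf ψ v w) with hQ
  have hμns : Nonsingular F (muOf ψ v w) := by
    intro c hc
    have e1 := hc (fun r => cond r 1 0)
    have e0 := hc (fun r => cond r 0 1)
    rw [polar_muOf] at e1 e0
    simp only [Bool.cond_true, Bool.cond_false, mul_one, mul_zero, add_zero, zero_add] at e1 e0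
    funext r
    cases r
    · simpa using (mul_eq_zero.mp e1).resolve_left hb
    · simpa using (mul_eq_zero.mp e0).resolve_left hb
  refine ⟨hμns, ?_⟩
  have hQns : ∀ z : Bool × Bool → F, (∀ y, polar Q z y = 0) → z = 0 := by
    intro z hz
    have e1 := hz (fun p => cond p.1 0 (cond p.2 1 0))
    have e2 := hz (fun p => cond p.1 0 (cond p.2 0 1))
    have e3 := hz (fun p => cond p.1 (cond p.2 1 0) 0)
    have e4 := hz (fun p => cond p.1 (cond p.2 0 1) 0)
    rw [hQ, polar_QOf] at e1 e2 e3 e4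
    simp only [Bool.cond_true, Bool.cond_false, mul_one, mul_zero, add_zero, zero_add] at e1 e2 e3 e4
    have hz1 : z (false, false) = 0 := (mul_eq_zero.mp e1).resolve_left hb
    have hz2 : z (false, true) = 0 := (mul_eq_zero.mp e2).resolve_left hb
    have hz3 : z (true, false) = 0 := by
      rcases mul_eq_zero.mp e3 with h | h
      · exact absurd h ha
      · exact (mul_eq_zero.mp h).resolve_left hb
    have hz4 : z (true, true) = 0 := by
      rcases mul_eq_zero.mp e4 with h | h
      · exact absurd h ha
      · exact (mul_eq_zero.mp h).resolve_left hb
    funext p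
    obtain ⟨s, t⟩ := p
    cases s <;> cases t <;> simpa
  have hVrank : Module.finrank F (Bool × Bool → F) = 4 := by
    simp [Module.finrank_pi]
  have hub : ∀ d ∈ {d | ∃ U : Submodule F (Bool × Bool → F),
      Module.finrank F U = d ∧ ∀ z ∈ U, Q z = 0}, d ≤ 2 := by
    rintro d ⟨U, rfl, hU⟩
    set B' := polarBilin Q with hB'
    have hinj : Function.Injective B' := by
      intro z1 z2 h
      have h0 : B' (z1 - z2) = 0 := by rw [_root_.map_sub, h, sub_self]
      have hz := hQns (z1 - z2) (fun y => by
        have hy := DFunLike.congr_fun h0 y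
        simpa [hB'] using hy)
      exact sub_eq_zero.mp hz
    have hle : Submodule.map B' U ≤ U.dualAnnihilator := by
      rintro f ⟨zu, hzu, rfl⟩
      rw [Submodule.mem_dualAnnihilator]
      intro y hy
      have hp : polar Q zu y = 0 := by
        simp only [polar, hU _ hzu, hU _ hy, hU _ (U.add_mem hzu hy)]; ring
      simpa [hB'] using hp
    have e1 : Module.finrank F (Submodule.map B' U) = Module.finrank F U :=
      (LinearEquiv.finrank_eq (Submodule.equivMapOfInjective B' hinj U)).symm
    have e2 : Module.finrank F U ≤ Module.finrank F U.dualAnnihilator := by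
      rw [← e1]; exact Submodule.finrank_mono hle
    have e3 : Module.finrank F U.dualAnnihilator
        = Module.finrank F ((Bool × Bool → F) ⧸ U) :=
      (LinearEquiv.finrank_eq (Subspace.quotEquivAnnihilator U)).symm
    have e4 := Submodule.finrank_quotient_add_finrank U
    rw [hVrank] at e4
    omega
  have hmem2 : 2 ∈ {d | ∃ U : Submodule F (Bool × Bool → F),
      Module.finrank F U = 2 ∧ ∀ z ∈ U, Q z = 0} := by
    set uu : Bool × Bool → F := fun p => cond p.1 (cond p.2 1 0) (cond p.2 0 1) with huu
    set uu' : Bool × Bool → F :=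
      fun p => cond p.1 (cond p.2 0 1) (cond p.2 a (polar ψ v w / ψ w)) with huu'
    have hinjG : Function.Injective (pairMap uu uu') := by
      intro c d hcd
      have e1 := congrFun hcd (true, false)
      have e2 := congrFun hcd (true, true)
      simp only [pairMap_apply, huu, huu', Bool.cond_true, Bool.cond_false,
        mul_zero, mul_one, zero_add, add_zero] at e1 e2
      funext r
      cases r
      · exact e2
      · exact e1
    refine ⟨LinearMap.range (pairMap uu uu'), ?_, ?_⟩
    · rw [LinearMap.finrank_range_of_inj hinjG]
      simp [Module.finrank_pi]
    · rintro z ⟨c, rfl⟩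
      rw [hQ, QOf_apply, hvw]
      simp only [pairMap_apply, huu, huu', Bool.cond_true, Bool.cond_false,
        mul_zero, mul_one, zero_add, add_zero]
      field_simp
      linear_combination (a * (ψ w) * (ψ w) * (c false * c false)
        + a * (c false * c true) * polar ψ v w * ψ w
        + a * (c true * c true) * polar ψ v w * polar ψ v w
        + a * a * (c true * c true) * (ψ w) * (ψ w)
        + c false * ψ w * c true * polar ψ v w * a) * h2
  have hiT : iT F Q = 2 := by
    apply le_antisymm
    · exact csSup_le ⟨2, hmem2⟩ hub
    · exact le_csSup ⟨2, hub⟩ hmem2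
  have hiD : iD F Q = 0 := by
    have hradbot : quadRadical F Q = ⊥ := by
      rw [eq_bot_iff]
      intro z hz
      rw [Submodule.mem_bot]
      exact hQns z ((mem_quadRadical Q z).mp hz).1
    show Module.finrank F (quadRadical F Q) = 0
    rw [hradbot]
    exact finrank_bot F _
  show iT F Q - iD F Q = 2
  rw [hiT, hiD]

end withchar

/-- let `ψ` be anisotropic, `π = ⟨1,a⟩_b` an anisotropic 1-fold
bilinear Pfister form, and suppose `π⊗ψ` is isotropic. Then there is an anisotropic
binary form `μ ≼ ψ` with either (`μ` nonsingular and `i_W(π⊗μ) = 2`) or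
(`μ` totally singular and `i_d(π⊗μ) = 2`); moreover, if `i_d(π⊗ψ) > 0` then `μ`
can be chosen totally singular with `i_d(π⊗μ) = 2`. -/
theorem stmt14 (F : Type) [Field F] [CharP F 2] {κ : Type} [Fintype κ]
    (ψ : QuadraticForm F (κ → F)) (hψan : ψ.Anisotropic)
    (a : F) (hπan : BAnisotropic F (bPf1 F a))
    (hiso : Isotropic F (tmulQ F (bPf1 F a) ψ)) :
    (∃ μ : QuadraticForm F (Bool → F), μ.Anisotropic ∧ Dominates F ψ μ ∧
      ((Nonsingular F μ ∧ iW F (tmulQ F (bPf1 F a) μ) = 2) ∨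
       (TotallySingular F μ ∧ iD F (tmulQ F (bPf1 F a) μ) = 2))) ∧
    (0 < iD F (tmulQ F (bPf1 F a) ψ) →
      ∃ μ : QuadraticForm F (Bool → F), μ.Anisotropic ∧ Dominates F ψ μ ∧
        TotallySingular F μ ∧ iD F (tmulQ F (bPf1 F a) μ) = 2) := by
  have extract : ∀ z : Bool × κ → F, z ≠ 0 → tmulQ F (bPf1 F a) ψ z = 0 →
      (fun i => z (true, i)) ≠ 0
        ∧ ψ (fun i => z (false, i)) = a * ψ (fun i => z (true, i)) := by
    intro z hz hz0
    rw [tmulQ_bool_apply] at hz0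
    have hvw : ψ (fun i => z (false, i)) = a * ψ (fun i => z (true, i)) := by
      have h := eq_neg_of_add_eq_zero_left hz0
      rwa [CharTwo.neg_eq] at h
    refine ⟨?_, hvw⟩
    intro h
    apply hz
    have hx0 : ψ (fun i => z (true, i)) = 0 := by rw [h, map_zero]
    have hv0 : (fun i => z (false, i)) = 0 := hψan _ (by rw [hvw, hx0, mul_zero])
    funext p
    obtain ⟨s, i⟩ := p
    cases s
    · exact congrFun hv0 i
    · exact congrFun h i
  have mkTS : ∀ z : Bool × κ → F, z ≠ 0 → tmulQ F (bPf1 F a) ψ z = 0 →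
      polar ψ (fun i => z (false, i)) (fun i => z (true, i)) = 0 →
      ∃ μ : QuadraticForm F (Bool → F), μ.Anisotropic ∧ Dominates F ψ μ ∧
        TotallySingular F μ ∧ iD F (tmulQ F (bPf1 F a) μ) = 2 := by
    intro z hz hz0 hb
    obtain ⟨hw, hvw⟩ := extract z hz hz0
    obtain ⟨hani, hdom⟩ := muOf_ani_dom ψ hψan hπan _ _ hw hvw
    obtain ⟨hts, hid⟩ := caseTS ψ hψan hπan _ _ hw hvw hb
    exact ⟨_, hani, hdom, hts, hid⟩
  obtain ⟨z, hz, hz0⟩ := hiso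
  obtain ⟨hw, hvw⟩ := extract z hz hz0
  constructor
  · by_cases hb : polar ψ (fun i => z (false, i)) (fun i => z (true, i)) = 0
    · obtain ⟨μ, h1, h2, h3, h4⟩ := mkTS z hz hz0 hb
      exact ⟨μ, h1, h2, Or.inr ⟨h3, h4⟩⟩
    · obtain ⟨hani, hdom⟩ := muOf_ani_dom ψ hψan hπan _ _ hw hvw
      obtain ⟨hns, hiw⟩ := caseNS ψ hψan hπan _ _ hw hvw hb
      exact ⟨_, hani, hdom, Or.inl ⟨hns, hiw⟩⟩
  · intro hd
    have hnt : ∃ z' : quadRadical F (tmulQ F (bPf1 F a) ψ), z' ≠ 0 := by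
      have : Nontrivial (quadRadical F (tmulQ F (bPf1 F a) ψ)) :=
        Module.finrank_pos_iff.mp hd
      exact exists_ne 0
    obtain ⟨⟨z', hz'mem⟩, hz'ne⟩ := hnt
    have hz'0 : z' ≠ 0 := fun h => hz'ne ((Submodule.mk_eq_zero _ _).mpr h)
    obtain ⟨hpol, hq0⟩ := (mem_quadRadical _ z').mp hz'mem
    have hb : polar ψ (fun i => z' (false, i)) (fun i => z' (true, i)) = 0 := by
      have hy := hpol (fun p => cond p.1 0 (z' (true, p.2)))
      rw [polar_tmulQ_bool] at hy
      simp only [Bool.cond_false, Bool.cond_true] at hy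
      rw [show (fun _ : κ => (0 : F)) = 0 from rfl, polar_zero_right, mul_zero, add_zero] at hy
      exact hy
    exact mkTS z' hz'0 hq0 hb

end Char2QF
end
end
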